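/- Define g'(z) = (4/z³) log(z+√(z²−4)) + √(z²−4)/z² − (4/z³) log 2 − (2πi)/z³ for z in the upper half-plane (principal branches). Then for x ∈ (−2, 2), the boundary value from above satisfies g'₊(x) = −πi ψ(x), where ψ is the equilibrium density. -/

import Mathlib

open Real Filter Topology Complex

/-- The branch of `√(z²−4)` analytic off `[−2,2]` that behaves like `z` at infinity,
written as `(z−2)^{1/2}(z+2)^{1/2}` with principal branches. -/
noncomputable def sqrtZsqSub4 (z : ℂ) : ℂ :=
  (z - 2) ^ ((1 : ℂ) / 2) * (z + 2) ^ ((1 : ℂ) / 2)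

/-- `g'(z) = (4/z³) log(z+√(z²−4)) + √(z²−4)/z² − (4/z³) log 2 − (2πi)/z³`
for `z` in the upper half-plane (principal branches). -/
noncomputable def gPrime (z : ℂ) : ℂ :=
  4 / z ^ 3 * Complex.log (z + sqrtZsqSub4 z) + sqrtZsqSub4 z / z ^ 2
    - 4 / z ^ 3 * (Real.log 2 : ℂ) - 2 * (π : ℂ) * Complex.I / z ^ 3

/-- The equilibrium density on the band: for `0 < |x| < 2`,
`ψ(x) = (1/π)(4 arctan(|x|/√(4-x²))/|x|³ − √(4-x²)/x²)`. -/
noncomputable def psiBand (x : ℝ) : ℝ :=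
  (1 / π) * (4 * Real.arctan (|x| / Real.sqrt (4 - x ^ 2)) / |x| ^ 3
    - Real.sqrt (4 - x ^ 2) / x ^ 2)

/-- For `x ∈ (−2, 2)`, `x ≠ 0`, the boundary value of `g'` from the upper half-plane
satisfies `g'₊(x) = −πi ψ(x)`. -/
theorem gPrime_boundary_value (x : ℝ) (hx : x ∈ Set.Ioo (-2 : ℝ) 2) (hx0 : x ≠ 0) :
    Tendsto (fun ε : ℝ => gPrime ((x : ℂ) + (ε : ℂ) * Complex.I)) (𝓝[>] 0)
      (𝓝 (-(π : ℂ) * Complex.I * (psiBand x : ℂ))) := by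
  obtain ⟨h2x, hx2⟩ := hx
  have hx0' : (x : ℂ) ≠ 0 := Complex.ofReal_ne_zero.2 hx0
  have hx3 : ((x : ℂ)) ^ 3 ≠ 0 := pow_ne_zero _ hx0'
  have hx2c : ((x : ℂ)) ^ 2 ≠ 0 := pow_ne_zero _ hx0'
  set s : ℝ := Real.sqrt (4 - x ^ 2) with hs_def
  have h4x : 0 < 4 - x ^ 2 := by nlinarith
  have hs : 0 < s := Real.sqrt_pos.2 h4x
  have hs2 : s ^ 2 = 4 - x ^ 2 := Real.sq_sqrt h4x.le
  set θ : ℝ := Real.arccos (x / 2) with hθ_def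
  set w : ℂ := (x : ℂ) + (s : ℂ) * Complex.I with hw_def
  -- limit of the path
  have hz : Tendsto (fun ε : ℝ => (x : ℂ) + (ε : ℂ) * Complex.I) (𝓝[>] 0) (𝓝 (x : ℂ)) := by
    have hc : Continuous fun ε : ℝ => (x : ℂ) + (ε : ℂ) * Complex.I := by continuity
    simpa using (hc.tendsto 0).mono_left nhdsWithin_le_nhds
  -- factor 1: (z-2)^(1/2) → √(2-x) * I
  have hlog1 : Tendsto (fun ε : ℝ => Complex.log ((x : ℂ) + (ε : ℂ) * Complex.I - 2)) (𝓝[>] 0)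
      (𝓝 ((Real.log (2 - x) : ℂ) + (π : ℂ) * Complex.I)) := by
    have h1 : Tendsto (fun ε : ℝ => (x : ℂ) + (ε : ℂ) * Complex.I - 2) (𝓝[>] 0)
        (𝓝[{z : ℂ | 0 ≤ z.im}] ((x : ℂ) - 2)) := by
      rw [tendsto_nhdsWithin_iff]
      refine ⟨by simpa using hz.sub tendsto_const_nhds, ?_⟩
      filter_upwards [self_mem_nhdsWithin] with ε (hε : 0 < ε)
      simp [Set.mem_setOf_eq, hε.le]
    have hre : ((x : ℂ) - 2).re < 0 := by simp; linarith
    have him : ((x : ℂ) - 2).im = 0 := by simp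
    have h2 := (Complex.tendsto_log_nhdsWithin_im_nonneg_of_re_neg_of_im_zero hre him).comp h1
    have habs : ‖(x : ℂ) - 2‖ = 2 - x := by
      rw [show (x : ℂ) - 2 = ((x - 2 : ℝ) : ℂ) by push_cast; ring, Complex.norm_real, Real.norm_eq_abs,
        abs_of_neg (by linarith)]
      ring
    rw [habs] at h2
    exact h2
  have hf1 : Tendsto (fun ε : ℝ => ((x : ℂ) + (ε : ℂ) * Complex.I - 2) ^ ((1 : ℂ) / 2)) (𝓝[>] 0)
      (𝓝 ((Real.sqrt (2 - x) : ℂ) * Complex.I)) := by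
    have hev : ∀ᶠ ε : ℝ in 𝓝[>] 0,
        Complex.exp (Complex.log ((x : ℂ) + (ε : ℂ) * Complex.I - 2) * (1 / 2))
          = ((x : ℂ) + (ε : ℂ) * Complex.I - 2) ^ ((1 : ℂ) / 2) := by
      filter_upwards [self_mem_nhdsWithin] with ε (hε : 0 < ε)
      rw [Complex.cpow_def_of_ne_zero, mul_comm]
      intro h
      have him0 : ((x : ℂ) + (ε : ℂ) * Complex.I - 2).im = 0 := by rw [h]; simp
      simp at him0
      exact hε.ne' him0
    have hval : Complex.exp (((Real.log (2 - x) : ℂ) + (π : ℂ) * Complex.I) * (1 / 2))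
        = (Real.sqrt (2 - x) : ℂ) * Complex.I := by
      rw [show ((Real.log (2 - x) : ℂ) + (π : ℂ) * Complex.I) * (1 / 2)
          = ((Real.log (2 - x) / 2 : ℝ) : ℂ) + ((π / 2 : ℝ) : ℂ) * Complex.I by push_cast; ring]
      rw [Complex.exp_add, ← Complex.ofReal_exp, Real.exp_half, Real.exp_log (by linarith),
        Complex.exp_mul_I, ← Complex.ofReal_cos, ← Complex.ofReal_sin,
        Real.cos_pi_div_two, Real.sin_pi_div_two]
      push_cast
      ring
    have := (Complex.continuous_exp.tendsto _).comp (hlog1.mul_const ((1 : ℂ) / 2))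
    rw [hval] at this
    exact this.congr' hev
  -- factor 2
  have hf2 : Tendsto (fun ε : ℝ => ((x : ℂ) + (ε : ℂ) * Complex.I + 2) ^ ((1 : ℂ) / 2)) (𝓝[>] 0)
      (𝓝 ((Real.sqrt (x + 2) : ℂ))) := by
    have hc : ContinuousAt (fun z : ℂ => z ^ ((1 : ℂ) / 2)) ((x : ℂ) + 2) :=
      continuousAt_cpow_const (Complex.mem_slitPlane_iff.2 (Or.inl (by simp; linarith)))
    have hval : ((x : ℂ) + 2) ^ ((1 : ℂ) / 2) = (Real.sqrt (x + 2) : ℂ) := by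
      rw [show (x : ℂ) + 2 = ((x + 2 : ℝ) : ℂ) by push_cast; ring,
        show (1 : ℂ) / 2 = (((1 : ℝ) / 2 : ℝ) : ℂ) by norm_num,
        ← Complex.ofReal_cpow (by linarith)]
      rw [Real.sqrt_eq_rpow]
    have := hc.tendsto.comp (hz.add (tendsto_const_nhds : Tendsto (fun _ : ℝ => (2 : ℂ)) _ _))
    rw [hval] at this
    exact this
  -- product
  have hprod : (Real.sqrt (2 - x) : ℂ) * Complex.I * (Real.sqrt (x + 2) : ℂ)
      = (s : ℂ) * Complex.I := by
    rw [hs_def, show (4 - x ^ 2 : ℝ) = (2 - x) * (x + 2) by ring,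
      Real.sqrt_mul (by linarith : (0 : ℝ) ≤ 2 - x)]
    push_cast
    ring
  have hsq := hf1.mul hf2
  rw [hprod] at hsq
  have hw : Tendsto (fun ε : ℝ => (x : ℂ) + (ε : ℂ) * Complex.I
      + ((x : ℂ) + (ε : ℂ) * Complex.I - 2) ^ ((1 : ℂ) / 2)
        * ((x : ℂ) + (ε : ℂ) * Complex.I + 2) ^ ((1 : ℂ) / 2)) (𝓝[>] 0) (𝓝 w) :=
    hz.add hsq
  -- log at w
  have habsw : ‖w‖ = 2 := by
    have h1 : Complex.normSq w = 4 := by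
      rw [hw_def, Complex.normSq_add_mul_I]
      nlinarith
    have h2 := Complex.sq_norm w
    nlinarith [norm_nonneg w]
  have hcosθ : Real.cos θ = x / 2 := Real.cos_arccos (by linarith) (by linarith)
  have hsqrt4 : Real.sqrt 4 = 2 := by
    rw [show (4 : ℝ) = 2 ^ 2 by norm_num, Real.sqrt_sq (by norm_num)]
  have hsinθ : Real.sin θ = s / 2 := by
    rw [hθ_def, Real.sin_arccos, show 1 - (x / 2) ^ 2 = (4 - x ^ 2) / 4 by ring,
      Real.sqrt_div h4x.le, hsqrt4, hs_def]
  have harg : Complex.arg w = θ := by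
    have hwe : w = (2 : ℝ) * (Complex.cos (θ : ℂ) + Complex.sin (θ : ℂ) * Complex.I) := by
      rw [← Complex.ofReal_cos, ← Complex.ofReal_sin, hcosθ, hsinθ, hw_def]
      push_cast
      ring
    rw [hwe]
    exact Complex.arg_mul_cos_add_sin_mul_I two_pos
      ⟨by have := Real.arccos_nonneg (x / 2); have := Real.pi_pos; rw [hθ_def]; linarith,
        hθ_def ▸ Real.arccos_le_pi (x / 2)⟩
  have hlogw : Complex.log w = (Real.log 2 : ℂ) + (θ : ℂ) * Complex.I := by
    unfold Complex.log
    rw [habsw, harg]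
  have hmem : w ∈ Complex.slitPlane := by
    refine Complex.mem_slitPlane_iff.2 (Or.inr ?_)
    rw [hw_def]
    simp [hs.ne']
  have hlogt := (continuousAt_clog hmem).tendsto.comp hw
  rw [hlogw] at hlogt
  -- assemble
  have hall : Tendsto (fun ε : ℝ => gPrime ((x : ℂ) + (ε : ℂ) * Complex.I)) (𝓝[>] 0)
      (𝓝 (4 / (x : ℂ) ^ 3 * ((Real.log 2 : ℂ) + (θ : ℂ) * Complex.I)
        + (s : ℂ) * Complex.I / (x : ℂ) ^ 2 - 4 / (x : ℂ) ^ 3 * (Real.log 2 : ℂ)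
        - 2 * (π : ℂ) * Complex.I / (x : ℂ) ^ 3)) := by
    simp only [gPrime, sqrtZsqSub4]
    have T1 : Tendsto (fun ε : ℝ => (4 : ℂ) / ((x : ℂ) + (ε : ℂ) * Complex.I) ^ 3) (𝓝[>] 0)
        (𝓝 (4 / (x : ℂ) ^ 3)) := tendsto_const_nhds.div (hz.pow 3) hx3
    exact (((T1.mul hlogt).add (hsq.div (hz.pow 2) hx2c)).sub
      (T1.mul tendsto_const_nhds)).sub (tendsto_const_nhds.div (hz.pow 3) hx3)
  -- identify the limit value
  have harct : Real.arctan (|x| / s) / |x| ^ 3 = Real.arctan (x / s) / x ^ 3 := by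
    rcases lt_or_gt_of_ne hx0 with h | h
    · rw [abs_of_neg h, show -x / s = -(x / s) by ring, Real.arctan_neg]
      ring
    · rw [abs_of_pos h]
  have hθeq : θ = π / 2 - Real.arctan (x / s) := by
    rw [hθ_def, Real.arccos_eq_pi_div_two_sub_arcsin,
      Real.arcsin_eq_arctan (by constructor <;> [nlinarith; nlinarith] : x / 2 ∈ Set.Ioo (-1 : ℝ) 1)]
    congr 2
    rw [show 1 - (x / 2) ^ 2 = (4 - x ^ 2) / 4 by ring, Real.sqrt_div h4x.le, hsqrt4, ← hs_def]
    field_simp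
  have key : 4 * θ / x ^ 3 + s / x ^ 2 - 2 * π / x ^ 3 = -π * psiBand x := by
    have hπ : (π : ℝ) ≠ 0 := Real.pi_ne_zero
    have hxx : |x| ≠ 0 := abs_ne_zero.2 hx0
    rw [psiBand, ← hs_def, hθeq,
      show -π * ((1 / π) * (4 * Real.arctan (|x| / s) / |x| ^ 3 - s / x ^ 2))
        = s / x ^ 2 - 4 * (Real.arctan (|x| / s) / |x| ^ 3) by field_simp; ring,
      harct]
    field_simp
    ring
  have hfin : 4 / (x : ℂ) ^ 3 * ((Real.log 2 : ℂ) + (θ : ℂ) * Complex.I)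
        + (s : ℂ) * Complex.I / (x : ℂ) ^ 2 - 4 / (x : ℂ) ^ 3 * (Real.log 2 : ℂ)
        - 2 * (π : ℂ) * Complex.I / (x : ℂ) ^ 3
      = -(π : ℂ) * Complex.I * (psiBand x : ℂ) := by
    have h1 : 4 / (x : ℂ) ^ 3 * ((Real.log 2 : ℂ) + (θ : ℂ) * Complex.I)
        + (s : ℂ) * Complex.I / (x : ℂ) ^ 2 - 4 / (x : ℂ) ^ 3 * (Real.log 2 : ℂ)
        - 2 * (π : ℂ) * Complex.I / (x : ℂ) ^ 3
        = ((4 * θ / x ^ 3 + s / x ^ 2 - 2 * π / x ^ 3 : ℝ) : ℂ) * Complex.I := by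
      push_cast
      field_simp
      ring
    rw [h1, key]
    push_cast
    ring
  rw [← hfin]
  exact hall
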